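/- Let d be a positive integer and let G be a countable graph with all vertex degrees at most d. If G is locally hyperfinite, then G is weighted hyperfinite. -/

import Mathlib

open scoped ENNReal
open MeasureTheory

namespace AFPaper

variable {V : Type*} {W : Type*}

/-- The ball of radius `r` around `x` in the graph `G`. -/
def gball (G : SimpleGraph V) (x : V) (r : ℕ) : Set V :=
  {y | G.Reachable x y ∧ G.dist x y ≤ r}

/-- All vertex degrees of `G` are at most `d`. -/
def DegLE (G : SimpleGraph V) (d : ℕ) : Prop :=
  ∀ v : V, (G.neighborSet v).Finite ∧ (G.neighborSet v).ncard ≤ d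

/-- The boundary of `F` inside the induced subgraph on the ambient set `L`:
vertices of `F` adjacent (in `G`) to some vertex of `L` outside `F`. -/
def boundaryIn (G : SimpleGraph V) (L F : Set V) : Set V :=
  {x ∈ F | ∃ y ∈ L \ F, G.Adj x y}

/-- The boundary of `F` in `G`. -/
def boundary (G : SimpleGraph V) (F : Set V) : Set V :=
  boundaryIn G Set.univ F

/-- `F` is an `ε`-Følner set with respect to the induced subgraph on `L`. -/
def IsFolnerIn (G : SimpleGraph V) (L : Set V) (ε : ℝ) (F : Set V) : Prop :=
  F.Finite ∧ ((boundaryIn G L F).ncard : ℝ) < ε * (F.ncard : ℝ)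

/-- `F` is an `ε`-Følner set in `G`. -/
def IsFolner (G : SimpleGraph V) (ε : ℝ) (F : Set V) : Prop :=
  IsFolnerIn G Set.univ ε F

/-- The set `F` has diameter at most `r` in `G`. -/
def DiamLE (G : SimpleGraph V) (r : ℕ) (F : Set V) : Prop :=
  ∀ x ∈ F, ∀ y ∈ F, G.Reachable x y ∧ G.dist x y ≤ r

/-- The connected component of `x` in the subgraph of `G` induced on `S`. -/
def componentIn (G : SimpleGraph V) (S : Set V) (x : V) : Set V :=
  {y | ∃ (hx : x ∈ S) (hy : y ∈ S), (G.induce S).Reachable ⟨x, hx⟩ ⟨y, hy⟩}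

/-- All connected components of the subgraph induced on `S` have size at most `k`. -/
def SmallComponents (G : SimpleGraph V) (S : Set V) (k : ℕ) : Prop :=
  ∀ x ∈ S, (componentIn G S x).Finite ∧ (componentIn G S x).ncard ≤ k

/-- A witness for Property A with accuracy `ε` and radius `r`. -/
def PropertyAWith (G : SimpleGraph V) (ε : ℝ) (r : ℕ) : Prop :=
  ∃ Θ : V → V → ℝ,
    (∀ x, (Function.support (Θ x)).Finite) ∧
    (∀ x y, 0 ≤ Θ x y) ∧
    (∀ x, (∑ᶠ y, Θ x y) = 1) ∧
    (∀ x y, Θ x y ≠ 0 → y ∈ gball G x r) ∧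
    (∀ x y, G.Adj x y → (∑ᶠ z, |Θ x z - Θ y z|) < ε)

/-- Property A for graphs. -/
def PropertyA (G : SimpleGraph V) : Prop :=
  ∀ ε : ℝ, 0 < ε → ∃ r : ℕ, 1 ≤ r ∧ PropertyAWith G ε r

/-- Uniform local amenability. -/
def UniformlyLocallyAmenable (G : SimpleGraph V) : Prop :=
  ∀ ε : ℝ, 0 < ε → ∃ k : ℕ, 0 < k ∧
    ∀ L : Set V, L.Finite → L.Nonempty →
      ∃ M : Set V, M ⊆ L ∧ M.Nonempty ∧ M.ncard ≤ k ∧ IsFolnerIn G L ε M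

/-- Local hyperfiniteness. -/
def LocallyHyperfinite (G : SimpleGraph V) : Prop :=
  ∀ ε : ℝ, 0 < ε → ∃ k : ℕ, 0 < k ∧
    ∀ L : Set V, L.Finite → L.Nonempty →
      ∃ L' : Set V, L' ⊆ L ∧ ((L'.ncard : ℝ) < ε * (L.ncard : ℝ)) ∧
        SmallComponents G (L \ L') k

/-- Weighted hyperfiniteness. -/
def WeightedHyperfinite (G : SimpleGraph V) : Prop :=
  ∀ ε : ℝ, 0 < ε → ∃ k : ℕ, 0 < k ∧
    ∀ w : V → ℝ, (Function.support w).Finite → (∀ x, 0 ≤ w x) →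
      ∃ L : Set V, (∑ᶠ x ∈ L, w x) ≤ ε * (∑ᶠ x, w x) ∧ SmallComponents G Lᶜ k

/-- `Y` is a `k`-separator: deleting `Y` leaves components of size at most `k`. -/
def IsSeparator (G : SimpleGraph V) (k : ℕ) (Y : Set V) : Prop :=
  SmallComponents G Yᶜ k

/-- The space of `k`-separators, as a subspace of `V → Bool` (product of discrete
spaces); its Borel σ-algebra coincides with the induced product σ-algebra used here. -/
abbrev SepSpace (G : SimpleGraph V) (k : ℕ) :=
  {f : V → Bool // IsSeparator G k {x | f x = true}}

/-- Strong hyperfiniteness. -/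
def StronglyHyperfinite (G : SimpleGraph V) : Prop :=
  ∀ ε : ℝ, 0 < ε → ∃ k : ℕ, 0 < k ∧
    ∃ μ : Measure (SepSpace G k), μ Set.univ = 1 ∧
      ∀ x : V, μ {Y : SepSpace G k | Y.1 x = true} < ENNReal.ofReal ε

/-- An `(ε,r)`-Følner packing, encoded as a partial equivalence relation
`p : V → V → Bool` ("being in the same member of the packing"); the classes are the
members of the packing, and `p x x = false` exactly when `x` is not covered. -/
structure IsPacking (G : SimpleGraph V) (ε : ℝ) (r : ℕ) (p : V → V → Bool) : Prop where
  symm : ∀ x y, p x y = true → p y x = true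
  trans : ∀ x y z, p x y = true → p y z = true → p x z = true
  folner : ∀ x, p x x = true → IsFolner G ε {y | p x y = true}
  diam : ∀ x, p x x = true → DiamLE G r {y | p x y = true}

/-- The space of `(ε,r)`-packings of `G`, as a subspace of `V → V → Bool`. -/
abbrev PackingSpace (G : SimpleGraph V) (ε : ℝ) (r : ℕ) :=
  {p : V → V → Bool // IsPacking G ε r p}

/-- Strong Følner hyperfiniteness. -/
def StronglyFolnerHyperfinite (G : SimpleGraph V) : Prop :=
  ∀ ε : ℝ, 0 < ε → ∃ r : ℕ, 1 ≤ r ∧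
    ∃ ν : Measure (PackingSpace G ε r), ν Set.univ = 1 ∧
      ∀ x : V, ENNReal.ofReal (1 - ε) < ν {P : PackingSpace G ε r | P.1 x x = true}

/-- A packing is a tiling when it covers every vertex. -/
def IsTiling (p : V → V → Bool) : Prop := ∀ x, p x x = true

/-- Strong almost finiteness. -/
def StronglyAlmostFinite (G : SimpleGraph V) : Prop :=
  ∀ ε : ℝ, 0 < ε → ∃ r : ℕ, 1 ≤ r ∧
    ∃ ν : Measure (PackingSpace G ε r), ν Set.univ = 1 ∧
      ν {P : PackingSpace G ε r | IsTiling P.1} = 1 ∧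
      ∀ x : V, ν {P : PackingSpace G ε r | x ∈ boundary G {y | P.1 x y = true}} <
        ENNReal.ofReal ε

/-- Almost finiteness: `V(G)` can be tiled by `ε`-Følner sets of diameter at most `r`. -/
def AlmostFinite (G : SimpleGraph V) : Prop :=
  ∀ ε : ℝ, 0 < ε → ∃ r : ℕ, ∃ T : Set (Set V),
    (∀ F ∈ T, IsFolner G ε F ∧ DiamLE G r F) ∧
    T.PairwiseDisjoint id ∧ ⋃₀ T = Set.univ

/-- Uniform amenability. -/
def UniformlyAmenable (G : SimpleGraph V) : Prop :=
  ∀ ε : ℝ, 0 < ε → ∃ r : ℕ, ∀ x : V, ∃ F : Set V, F ⊆ gball G x r ∧ IsFolner G ε F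

/-- The `r`-neighborhood of a set `L`. -/
def setBall (G : SimpleGraph V) (L : Set V) (r : ℕ) : Set V :=
  ⋃ x ∈ L, gball G x r

/-- The uniform Følner property. -/
def UniformlyFolner (G : SimpleGraph V) : Prop :=
  ∀ ε : ℝ, 0 < ε → ∃ r : ℕ, 1 < r ∧
    ∀ L : Set V, L.Finite → L.Nonempty →
      ∃ H : Set V, L ⊆ H ∧ H ⊆ setBall G L r ∧ IsFolner G ε H

/-- The Følner sum `Σ_x Σ_{y ∼ x} |f(x) − f(y)|`. -/
noncomputable def FolnerSum (G : SimpleGraph V) (f : V → ℝ) : ℝ :=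
  ∑ᶠ x, ∑ᶠ y ∈ G.neighborSet x, |f x - f y|

/-- `f` is an `ε`-Følner function. -/
def IsFolnerFun (G : SimpleGraph V) (ε : ℝ) (f : V → ℝ) : Prop :=
  (Function.support f).Finite ∧ (∀ x, 0 ≤ f x) ∧ f ≠ 0 ∧
    FolnerSum G f < ε * (∑ᶠ x, f x)

/-- `f` is an `ε`-Følner probability measure. -/
def IsFolnerProb (G : SimpleGraph V) (ε : ℝ) (f : V → ℝ) : Prop :=
  IsFolnerFun G ε f ∧ (∑ᶠ x, f x) = 1

/-- Følner Property A. -/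
def FolnerPropertyA (G : SimpleGraph V) : Prop :=
  ∀ ε : ℝ, 0 < ε → ∃ r : ℕ, 1 ≤ r ∧
    ∃ Θ : V → V → ℝ,
      (∀ x, IsFolnerProb G ε (Θ x)) ∧
      (∀ x y, Θ x y ≠ 0 → y ∈ gball G x r) ∧
      (∀ x y, G.Adj x y → (∑ᶠ z, |Θ x z - Θ y z|) < ε)

/-- The collection of `ε`-Følner sets of diameter at most `r`. -/
def FolnerSets (G : SimpleGraph V) (ε : ℝ) (r : ℕ) : Set (Set V) :=
  {H | IsFolner G ε H ∧ DiamLE G r H}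

/-- Fractional almost finiteness. -/
def FractionallyAlmostFinite (G : SimpleGraph V) : Prop :=
  ∀ ε : ℝ, 0 < ε → ∃ r : ℕ, 1 ≤ r ∧
    ∃ F : Set V → ℝ,
      (∀ H ∈ FolnerSets G ε r, 0 ≤ F H) ∧
      (∀ x : V, ∃ c : ℝ, 0 ≤ c ∧ c < ε ∧
        (∑ᶠ H ∈ {H ∈ FolnerSets G ε r | x ∈ H}, F H) = 1 - c) ∧
      (∀ x : V, (∑ᶠ H ∈ {H ∈ FolnerSets G ε r | x ∈ boundary G H}, F H) < ε)

/-- Subexponential growth: `lim_{r→∞} sup_x log|B_r(x)|/r = 0`. -/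
def SubexpGrowth (G : SimpleGraph V) : Prop :=
  ∀ ε : ℝ, 0 < ε → ∃ R : ℕ, ∀ r : ℕ, R ≤ r → ∀ x : V,
    Real.log ((gball G x r).ncard : ℝ) < ε * (r : ℝ)

/-- The rooted `r`-ball of `G` at `v` is rooted-isomorphic to the rooted `r`-ball of
`H` at `w`. -/
def BallIso (G : SimpleGraph V) (v : V) (H : SimpleGraph W) (w : W) (r : ℕ) : Prop :=
  ∃ (hv : v ∈ gball G v r) (hw : w ∈ gball H w r)
    (φ : ↥(gball G v r) ≃ ↥(gball H w r)),
      φ ⟨v, hv⟩ = ⟨w, hw⟩ ∧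
      ∀ a b : ↥(gball G v r), G.Adj ↑a ↑b ↔ H.Adj ↑(φ a) ↑(φ b)

/-- Neighborhood equivalence of graphs. -/
def NeighborhoodEquiv (G : SimpleGraph V) (H : SimpleGraph W) : Prop :=
  (∀ (r : ℕ) (v : V), ∃ w : W, BallIso G v H w r) ∧
  (∀ (r : ℕ) (w : W), ∃ v : V, BallIso H w G v r)

end AFPaper

namespace AFPaper

section Aux

open scoped Classical

variable {V : Type*}

/-! ### Walks confined to a set of vertices -/

/-- Reachability through a walk whose support stays inside `A`. -/
def ReachIn (G : SimpleGraph V) (A : Set V) (x y : V) : Prop :=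
  ∃ p : G.Walk x y, ∀ v ∈ p.support, v ∈ A

variable {G : SimpleGraph V} {A B : Set V} {x y z : V}

lemma ReachIn.mem_left (h : ReachIn G A x y) : x ∈ A := by
  obtain ⟨p, hp⟩ := h; exact hp x p.start_mem_support

lemma ReachIn.mem_right (h : ReachIn G A x y) : y ∈ A := by
  obtain ⟨p, hp⟩ := h; exact hp y p.end_mem_support

lemma ReachIn.refl (hx : x ∈ A) : ReachIn G A x x :=
  ⟨SimpleGraph.Walk.nil, by simpa using hx⟩

lemma ReachIn.symm (h : ReachIn G A x y) : ReachIn G A y x := by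
  obtain ⟨p, hp⟩ := h
  exact ⟨p.reverse, fun v hv => hp v (by simpa using hv)⟩

lemma ReachIn.trans (h : ReachIn G A x y) (h' : ReachIn G A y z) : ReachIn G A x z := by
  obtain ⟨p, hp⟩ := h
  obtain ⟨q, hq⟩ := h'
  refine ⟨p.append q, fun v hv => ?_⟩
  rcases (SimpleGraph.Walk.mem_support_append_iff p q).mp hv with hv | hv
  · exact hp v hv
  · exact hq v hv

lemma ReachIn.mono (hAB : A ⊆ B) (h : ReachIn G A x y) : ReachIn G B x y := by
  obtain ⟨p, hp⟩ := h
  exact ⟨p, fun v hv => hAB (hp v hv)⟩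

private lemma reachIn_of_walk {x y : V} (p : G.Walk x y) (hp : ∀ v ∈ p.support, v ∈ A) :
    ∀ (hx : x ∈ A) (hy : y ∈ A), (G.induce A).Reachable ⟨x, hx⟩ ⟨y, hy⟩ := by
  induction p with
  | nil => intro hx hy; rfl
  | @cons u v w h q ih =>
    intro hx hy
    have hv : v ∈ A := hp v (by simp)
    have hadj : (G.induce A).Adj ⟨u, hx⟩ ⟨v, hv⟩ := h
    exact hadj.reachable.trans (ih (fun t ht => hp t (by simp [ht])) hv hy)

lemma induce_reachable_iff (hx : x ∈ A) (hy : y ∈ A) :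
    (G.induce A).Reachable ⟨x, hx⟩ ⟨y, hy⟩ ↔ ReachIn G A x y := by
  constructor
  · rintro ⟨q⟩
    refine ⟨q.map (SimpleGraph.Embedding.induce A).toHom, ?_⟩
    intro v hv
    replace hv : v ∈ (q.map (SimpleGraph.Embedding.induce A).toHom).support := hv
    rw [SimpleGraph.Walk.support_map, List.mem_map] at hv
    obtain ⟨⟨w, hw⟩, -, rfl⟩ := hv
    exact hw
  · rintro ⟨p, hp⟩
    exact reachIn_of_walk p hp hx hy

lemma mem_componentIn_iff : y ∈ componentIn G A x ↔ ReachIn G A x y := by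
  constructor
  · rintro ⟨hx, hy, h⟩
    exact (induce_reachable_iff hx hy).mp h
  · intro h
    exact ⟨h.mem_left, h.mem_right, (induce_reachable_iff h.mem_left h.mem_right).mpr h⟩

lemma mem_componentIn_self (hx : x ∈ A) : x ∈ componentIn G A x :=
  mem_componentIn_iff.mpr (ReachIn.refl hx)

lemma componentIn_subset : componentIn G A x ⊆ A := fun _ hy =>
  (mem_componentIn_iff.mp hy).mem_right

lemma componentIn_mono (hAB : A ⊆ B) : componentIn G A x ⊆ componentIn G B x := fun _ hy =>
  mem_componentIn_iff.mpr ((mem_componentIn_iff.mp hy).mono hAB)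

lemma componentIn_eq_of_mem (h : y ∈ componentIn G A x) :
    componentIn G A y = componentIn G A x := by
  have h' := mem_componentIn_iff.mp h
  ext z
  simp only [mem_componentIn_iff]
  exact ⟨fun hz => h'.trans hz, fun hz => h'.symm.trans hz⟩

lemma mem_componentIn_of_mem_support {p : G.Walk x y} (hp : ∀ v ∈ p.support, v ∈ A)
    {v : V} (hv : v ∈ p.support) : v ∈ componentIn G A x := by
  classical
  refine mem_componentIn_iff.mpr ⟨p.takeUntil v hv, fun t ht => hp t ?_⟩
  exact p.support_takeUntil_subset hv ht

/-! ### Combinatorial auxiliary lemmas -/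

open Finset in
/-- Double counting: total weight of vertices having a `T`-times heavier neighbour. -/
lemma weight_heavy_nbr_le {G : SimpleGraph V} {d : ℕ} (hdeg : DegLE G d)
    (w : V → ℝ) (hw0 : ∀ x, 0 ≤ w x) (S : Finset V) (hS : ∀ x, w x ≠ 0 → x ∈ S)
    {T : ℝ} (hT : 0 < T) :
    ∑ x ∈ S.filter (fun x => ∃ y, G.Adj x y ∧ T * w x ≤ w y), w x
      ≤ (d / T) * ∑ x ∈ S, w x := by
  classical
  have innernn : ∀ x : V, (0:ℝ) ≤ ∑ y ∈ S.filter (fun y => G.Adj x y), w y :=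
    fun x => Finset.sum_nonneg fun i _ => hw0 i
  have key : ∀ x ∈ S.filter (fun x => ∃ y, G.Adj x y ∧ T * w x ≤ w y),
      w x ≤ (1 / T) * ∑ y ∈ S.filter (fun y => G.Adj x y), w y := by
    intro x hx
    rw [Finset.mem_filter] at hx
    obtain ⟨hxS, y, hadj, hy⟩ := hx
    rcases eq_or_lt_of_le (hw0 x) with h0 | h0
    · rw [← h0]; exact mul_nonneg (by positivity) (innernn x)
    · have hyS : y ∈ S.filter (fun y => G.Adj x y) :=
        Finset.mem_filter.mpr ⟨hS y (by nlinarith), hadj⟩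
      have h1 : w y ≤ ∑ y ∈ S.filter (fun y => G.Adj x y), w y :=
        Finset.single_le_sum (fun i _ => hw0 i) hyS
      rw [one_div, inv_mul_eq_div, le_div_iff₀ hT, mul_comm]
      exact le_trans hy h1
  calc ∑ x ∈ S.filter (fun x => ∃ y, G.Adj x y ∧ T * w x ≤ w y), w x
      ≤ ∑ x ∈ S.filter (fun x => ∃ y, G.Adj x y ∧ T * w x ≤ w y),
          (1 / T) * ∑ y ∈ S.filter (fun y => G.Adj x y), w y := Finset.sum_le_sum key
    _ ≤ ∑ x ∈ S, (1 / T) * ∑ y ∈ S.filter (fun y => G.Adj x y), w y := by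
        refine Finset.sum_le_sum_of_subset_of_nonneg (Finset.filter_subset _ _) ?_
        intro i _ _
        have := innernn i
        positivity
    _ = (1 / T) * ∑ x ∈ S, ∑ y ∈ S.filter (fun y => G.Adj x y), w y := by
        rw [Finset.mul_sum]
    _ = (1 / T) * ∑ x ∈ S, ∑ y ∈ S, if G.Adj x y then w y else 0 := by
        congr 1
        exact Finset.sum_congr rfl fun x _ => Finset.sum_filter _ _
    _ = (1 / T) * ∑ y ∈ S, ∑ x ∈ S, if G.Adj x y then w y else 0 := by
        rw [Finset.sum_comm]
    _ ≤ (1 / T) * ∑ y ∈ S, (d : ℝ) * w y := by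
        have hle : ∀ y ∈ S, (∑ x ∈ S, if G.Adj x y then w y else 0) ≤ (d:ℝ) * w y := by
          intro y _
          rw [← Finset.sum_filter, Finset.sum_const, nsmul_eq_mul]
          have hsub : S.filter (fun x => G.Adj x y) ⊆ (hdeg y).1.toFinset := by
            intro x hx
            rw [Finset.mem_filter] at hx
            simpa [Set.Finite.mem_toFinset, SimpleGraph.mem_neighborSet] using hx.2.symm
          have hcard : (S.filter (fun x => G.Adj x y)).card ≤ d := by
            refine le_trans (Finset.card_le_card hsub) ?_
            rw [← Set.ncard_eq_toFinset_card _ (hdeg y).1]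
            exact (hdeg y).2
          have := hw0 y
          have hcast : ((S.filter (fun x => G.Adj x y)).card : ℝ) ≤ (d : ℝ) := by
            exact_mod_cast hcard
          nlinarith
        exact mul_le_mul_of_nonneg_left (Finset.sum_le_sum hle) (by positivity)
    _ = (d / T) * ∑ x ∈ S, w x := by
        rw [← Finset.mul_sum]; ring

/-- Pigeonhole over residue classes. -/
lemma exists_residue {m : ℕ} (hm : 0 < m) (F : Finset V) (w : V → ℝ)
    (g : V → ℤ) {W : ℝ} (hFW : ∑ x ∈ F, w x ≤ W) :
    ∃ s0 : ℤ, 0 ≤ s0 ∧ s0 < m ∧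
      ∑ x ∈ F.filter (fun x => g x % m = s0), w x ≤ W / m := by
  classical
  by_contra hcon
  push_neg at hcon
  set t : Finset ℤ := (Finset.range m).image ((↑) : ℕ → ℤ) with ht
  have hmaps : ∀ x ∈ F, g x % (m:ℤ) ∈ t := by
    intro x _
    refine Finset.mem_image.mpr ⟨(g x % m).toNat, ?_, ?_⟩
    · rw [Finset.mem_range]
      have h1 : g x % (m:ℤ) < m := Int.emod_lt_of_pos _ (by exact_mod_cast hm)
      have h2 : 0 ≤ g x % (m:ℤ) := Int.emod_nonneg _ (by exact_mod_cast hm.ne')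
      omega
    · exact Int.toNat_of_nonneg (Int.emod_nonneg _ (by exact_mod_cast hm.ne'))
  have hsum : ∑ s0 ∈ t, ∑ x ∈ F.filter (fun x => g x % m = s0), w x = ∑ x ∈ F, w x :=
    Finset.sum_fiberwise_of_maps_to hmaps w
  have hlt : ∀ s0 ∈ t, W / m < ∑ x ∈ F.filter (fun x => g x % m = s0), w x := by
    intro s0 hs0
    obtain ⟨n, hn, rfl⟩ := Finset.mem_image.mp hs0
    exact hcon _ (by positivity) (by exact_mod_cast Finset.mem_range.mp hn)
  have hcardt : t.card = m := by
    rw [ht, Finset.card_image_of_injective _ (fun a b h => by exact_mod_cast h),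
      Finset.card_range]
  have htne : t.Nonempty := by
    rw [← Finset.card_pos, hcardt]; exact hm
  have hbig := Finset.sum_lt_sum_of_nonempty htne hlt
  rw [hsum, Finset.sum_const, hcardt, nsmul_eq_mul] at hbig
  have hmne : (m:ℝ) ≠ 0 := by positivity
  rw [mul_div_cancel₀ _ hmne] at hbig
  linarith

/-- Discrete intermediate value property along a walk. -/
lemma walk_exists_j_eq {G : SimpleGraph V} (j : V → ℤ) (A : Set V)
    (hstep : ∀ u v, u ∈ A → v ∈ A → G.Adj u v → j v ≤ j u + 1) :
    ∀ {x y : V} (p : G.Walk x y), (∀ v ∈ p.support, v ∈ A) → ∀ c : ℤ,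
      j x ≤ c → c ≤ j y → ∃ v ∈ p.support, j v = c := by
  intro x y p
  induction p with
  | nil =>
    intro hp c h1 h2
    exact ⟨_, by simp, le_antisymm h1 h2⟩
  | @cons u u' y h q ih =>
    intro hp c h1 h2
    by_cases hc : j u' ≤ c
    · obtain ⟨v, hv, hjv⟩ := ih (fun t ht => hp t (by simp [ht])) c hc h2
      exact ⟨v, by simp [hv], hjv⟩
    · push_neg at hc
      have hu : u ∈ A := hp u (by simp)
      have hu' : u' ∈ A := hp u' (by simp)
      have hs := hstep u u' hu hu' h
      have hcj : c = j u := by omega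
      exact ⟨u, by simp, hcj ▸ rfl⟩

/-- In a region avoiding a residue class of `j` and with unit steps, `j` varies
by at most `m - 2`. -/
lemma band_bound {G : SimpleGraph V} {A : Set V} (j : V → ℤ) (m : ℕ) (s0 : ℤ)
    (hs0 : 0 ≤ s0) (hs0m : s0 < m)
    (hstep : ∀ u v, u ∈ A → v ∈ A → G.Adj u v → j v ≤ j u + 1)
    (hres : ∀ v ∈ A, j v % m ≠ s0)
    {x y : V} (h : ReachIn G A x y) : j y ≤ j x + m - 2 := by
  obtain ⟨p, hp⟩ := h
  by_contra hcon
  push_neg at hcon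
  have hm0 : (0:ℤ) < m := lt_of_le_of_lt hs0 hs0m
  set r : ℤ := (s0 - j x) % m with hr
  have h1 : 0 ≤ r := Int.emod_nonneg _ (ne_of_gt hm0)
  have h2 : r < m := Int.emod_lt_of_pos _ hm0
  obtain ⟨v, hv, hjv⟩ := walk_exists_j_eq j A hstep p hp (j x + r) (by omega) (by omega)
  have hmod : j v % m = s0 := by
    have hc : j x + r = s0 + m * -((s0 - j x) / m) := by
      rw [hr, Int.emod_def]; ring
    rw [hjv, hc, Int.add_mul_emod_self_left, Int.emod_eq_of_lt hs0 hs0m]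
  exact hres v (hp v hv) hmod

end Aux

end AFPaper

namespace AFPaper

/-- Local hyperfiniteness implies weighted hyperfiniteness. -/
theorem locallyHyperfinite_implies_weightedHyperfinite
    (d : ℕ) (hd : 0 < d) {V : Type} [Countable V]
    (G : SimpleGraph V) (hdeg : DegLE G d)
    (hLH : LocallyHyperfinite G) :
    WeightedHyperfinite G := by
  classical
  intro ε hε
  have hd0 : (0:ℝ) < d := by exact_mod_cast hd
  -- the constants
  set T : ℝ := 3 * (d + 1) / ε + 2 with hTdef
  have hTq : 0 ≤ 3 * ((d:ℝ) + 1) / ε := by positivity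
  have hTpos : 0 < T := by rw [hTdef]; linarith
  have hT1 : 1 < T := by rw [hTdef]; linarith
  have hdT : (d:ℝ) / T ≤ ε / 3 := by
    rw [div_le_div_iff₀ hTpos (by norm_num : (0:ℝ) < 3)]
    have hεT : ε * T = 3 * ((d:ℝ) + 1) + 2 * ε := by
      rw [hTdef]
      field_simp
    nlinarith [hε.le]
  set m : ℕ := max 3 ⌈(3:ℝ)/ε⌉₊ with hmdef
  have hm3 : 3 ≤ m := le_max_left _ _
  have hmpos : 0 < m := by omega
  have hmR : (0:ℝ) < m := by exact_mod_cast hmpos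
  have hm3ε : (3:ℝ)/ε ≤ m := by
    refine le_trans (Nat.le_ceil _) ?_
    exact_mod_cast le_max_right 3 ⌈(3:ℝ)/ε⌉₊
  have h3εm : (3:ℝ) ≤ ε * m := by
    rw [div_le_iff₀ hε] at hm3ε
    linarith [hm3ε]
  set Tpow : ℝ := T ^ (m - 1) with hTpowdef
  have hTpow1 : (1:ℝ) ≤ Tpow := by
    calc (1:ℝ) = 1 ^ (m-1) := (one_pow _).symm
    _ ≤ T ^ (m-1) := pow_le_pow_left₀ zero_le_one hT1.le _
  have hTpowpos : 0 < Tpow := by positivity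
  set ε3 : ℝ := ε / (3 * Tpow ^ 2) with hε3def
  have hε3 : 0 < ε3 := by rw [hε3def]; positivity
  have hε3T : ε3 * Tpow ^ 2 = ε / 3 := by
    rw [hε3def]; field_simp
  obtain ⟨k, hkpos, hLHk⟩ := hLH ε3 hε3
  refine ⟨k, hkpos, ?_⟩
  intro w hw hw0
  -- the support and total weight
  set S : Finset V := hw.toFinset with hSdef
  set Wt : ℝ := ∑ x ∈ S, w x with hWtdef
  have hWtnn : 0 ≤ Wt := Finset.sum_nonneg fun i _ => hw0 i
  have htot : ∑ᶠ x, w x = Wt := finsum_eq_sum w hw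
  have hSmem : ∀ x : V, x ∈ S ↔ w x ≠ 0 := fun x => by
    rw [hSdef, Set.Finite.mem_toFinset, Function.mem_support]
  have hSpos : ∀ x ∈ S, 0 < w x := fun x hx =>
    lt_of_le_of_ne (hw0 x) (Ne.symm ((hSmem x).mp hx))
  -- step 1: remove vertices with a much heavier neighbour
  set Y1 : Finset V := S.filter (fun x => ∃ y, G.Adj x y ∧ T * w x ≤ w y) with hY1def
  have hY1w : ∑ x ∈ Y1, w x ≤ (ε/3) * Wt := by
    refine le_trans (weight_heavy_nbr_le hdeg w hw0 S (fun x hx => (hSmem x).mpr hx) hTpos) ?_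
    exact mul_le_mul_of_nonneg_right hdT hWtnn
  -- step 2: remove a light residue class of the log-weight
  set j : V → ℤ := fun v => ⌊Real.log (w v) / Real.log T⌋ with hjdef
  have hsubY1 : ∑ x ∈ S \ Y1, w x ≤ Wt :=
    Finset.sum_le_sum_of_subset_of_nonneg (Finset.sdiff_subset) (fun i _ _ => hw0 i)
  obtain ⟨s0, hs00, hs0m, hs0w⟩ := exists_residue hmpos (S \ Y1) w j hsubY1
  set Y2 : Finset V := (S \ Y1).filter (fun x => j x % m = s0) with hY2def
  have hY2w : ∑ x ∈ Y2, w x ≤ (ε/3) * Wt := by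
    refine le_trans hs0w ?_
    rw [div_le_iff₀ hmR]
    nlinarith [hWtnn, h3εm]
  set M : Finset V := (S \ Y1) \ Y2 with hMdef
  have hMS : M ⊆ S := le_trans Finset.sdiff_subset Finset.sdiff_subset
  set MS : Set V := (↑M : Set V) with hMSdef
  have hMSfin : MS.Finite := M.finite_toSet
  have hMSS : ∀ x, x ∈ MS → x ∈ S := fun x hx => hMS (by exact_mod_cast hx)
  have hMSpos : ∀ x ∈ MS, 0 < w x := fun x hx => hSpos x (hMSS x hx)
  have hlogT : 0 < Real.log T := Real.log_pos hT1
  -- unit steps of `j` inside `M`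
  have hstep : ∀ u v, u ∈ MS → v ∈ MS → G.Adj u v → j v ≤ j u + 1 := by
    intro u v hu hv hadj
    have huM : u ∈ M := by exact_mod_cast hu
    have hunotY1 : u ∉ Y1 := fun hc => (Finset.mem_sdiff.mp (Finset.mem_sdiff.mp huM).1).2 hc
    have hwv : w v < T * w u := by
      by_contra hcon
      push_neg at hcon
      exact hunotY1 (Finset.mem_filter.mpr ⟨hMS huM, v, hadj, hcon⟩)
    have hwu : 0 < w u := hMSpos u hu
    have hwv0 : 0 < w v := hMSpos v hv
    have hlog : Real.log (w v) < Real.log (w u) + Real.log T := by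
      have h := Real.log_lt_log hwv0 hwv
      rwa [Real.log_mul (ne_of_gt hTpos) (ne_of_gt hwu), add_comm] at h
    have hdivlt : Real.log (w v) / Real.log T ≤ Real.log (w u) / Real.log T + 1 := by
      rw [div_le_iff₀ hlogT]
      have heq : (Real.log (w u) / Real.log T + 1) * Real.log T
          = Real.log (w u) + Real.log T := by
        field_simp
      rw [heq]
      linarith
    have hfl := Int.floor_mono hdivlt
    rwa [Int.floor_add_one] at hfl
  have hres : ∀ v ∈ MS, j v % m ≠ s0 := by
    intro v hv hc
    have hvM : v ∈ M := by exact_mod_cast hv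
    rw [hMdef, Finset.mem_sdiff] at hvM
    exact hvM.2 (Finset.mem_filter.mpr ⟨hvM.1, hc⟩)
  -- weights are comparable inside a connected piece of `M`
  have hband : ∀ x y : V, ReachIn G MS x y → w y ≤ Tpow * w x := by
    intro x y hr
    have hj2 := band_bound j m s0 hs00 hs0m hstep hres hr
    have hwx : 0 < w x := hMSpos x hr.mem_left
    have hwy : 0 < w y := hMSpos y hr.mem_right
    have h1 : Real.log (w y) / Real.log T < (j y : ℝ) + 1 := Int.lt_floor_add_one _
    have h2 : (j x : ℝ) ≤ Real.log (w x) / Real.log T := Int.floor_le _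
    have hjR : (j y : ℝ) + 1 ≤ (j x : ℝ) + ((m:ℝ) - 1) := by
      have h' : j y + 1 ≤ j x + (m:ℤ) - 1 := by omega
      have h'' : ((j y + 1 : ℤ) : ℝ) ≤ ((j x + (m:ℤ) - 1 : ℤ) : ℝ) := by exact_mod_cast h'
      push_cast at h''
      linarith
    have hlt : Real.log (w y) / Real.log T < Real.log (w x) / Real.log T + ((m:ℝ) - 1) := by
      linarith
    have hmul : Real.log (w y) < Real.log (w x) + ((m:ℝ) - 1) * Real.log T := by
      rw [div_lt_iff₀ hlogT] at hlt
      have heq : (Real.log (w x) / Real.log T + ((m:ℝ) - 1)) * Real.log T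
          = Real.log (w x) + ((m:ℝ) - 1) * Real.log T := by
        field_simp
      linarith [hlt, heq.symm.le, heq.le]
    have hlogTpow : Real.log (w x * Tpow)
        = Real.log (w x) + ((m:ℝ) - 1) * Real.log T := by
      rw [Real.log_mul (ne_of_gt hwx) (ne_of_gt hTpowpos), hTpowdef, Real.log_pow]
      congr 1
      congr 1
      have : ((m - 1 : ℕ) : ℝ) = (m:ℝ) - 1 := by
        have : 1 ≤ m := by omega
        push_cast [Nat.cast_sub this]
        ring
      rw [this]
    have hfin : w y < w x * Tpow := by
      rw [← Real.log_lt_log_iff hwy (by positivity), hlogTpow]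
      exact hmul
    linarith [hfin]
  -- step 3: cut each connected piece of `M` using local hyperfiniteness
  set Rsep : Set V → Set V := fun C =>
    if h : C.Finite ∧ C.Nonempty then (hLHk C h.1 h.2).choose else ∅ with hRsepdef
  have hRsub_all : ∀ C : Set V, Rsep C ⊆ C := by
    intro C
    simp only [hRsepdef]
    by_cases h : C.Finite ∧ C.Nonempty
    · rw [dif_pos h]
      exact (hLHk C h.1 h.2).choose_spec.1
    · rw [dif_neg h]
      exact Set.empty_subset C
  have hRspec : ∀ C : Set V, (h1 : C.Finite) → (h2 : C.Nonempty) →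
      ((Rsep C).ncard : ℝ) < ε3 * (C.ncard : ℝ) ∧ SmallComponents G (C \ Rsep C) k := by
    intro C h1 h2
    have h : C.Finite ∧ C.Nonempty := ⟨h1, h2⟩
    simp only [hRsepdef]
    rw [dif_pos h]
    exact (hLHk C h.1 h.2).choose_spec.2
  have hCfin : ∀ x : V, (componentIn G MS x).Finite :=
    fun x => hMSfin.subset componentIn_subset
  set compF : V → Finset V := fun x => (hCfin x).toFinset with hcompFdef
  have hmem_compF : ∀ a x : V, a ∈ compF x ↔ a ∈ componentIn G MS x := fun a x => by
    rw [hcompFdef]; exact Set.Finite.mem_toFinset _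
  have hRfin : ∀ x : V, (Rsep (componentIn G MS x)).Finite :=
    fun x => (hCfin x).subset (hRsub_all _)
  set RF : V → Finset V := fun x => (hRfin x).toFinset with hRFdef
  have hmem_RF : ∀ a x : V, a ∈ RF x ↔ a ∈ Rsep (componentIn G MS x) := fun a x => by
    rw [hRFdef]; exact Set.Finite.mem_toFinset _
  set Y3 : Set V := {x | x ∈ MS ∧ x ∈ Rsep (componentIn G MS x)} with hY3def
  have hY3fin : Y3.Finite := hMSfin.subset fun x hx => hx.1
  set Y3f : Finset V := hY3fin.toFinset with hY3fdef
  have hmem_Y3f : ∀ a : V, a ∈ Y3f ↔ a ∈ MS ∧ a ∈ Rsep (componentIn G MS a) := fun a => by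
    rw [hY3fdef]; rw [Set.Finite.mem_toFinset]; rfl
  have hY3fM : Y3f ⊆ M := by
    intro a ha
    have := ((hmem_Y3f a).mp ha).1
    exact_mod_cast this
  -- the two fudge identities for the fibres of the component map
  have hcompF_congr : ∀ a x0 : V, a ∈ componentIn G MS x0 → compF a = compF x0 := by
    intro a x0 ha
    have heq := componentIn_eq_of_mem ha
    ext b
    rw [hmem_compF, hmem_compF, heq]
  have hcomp_of_compF : ∀ a x0 : V, a ∈ MS → compF a = compF x0 →
      componentIn G MS a = componentIn G MS x0 := by
    intro a x0 _ h
    rw [← (hCfin a).coe_toFinset, ← (hCfin x0).coe_toFinset]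
    exact_mod_cast congrArg (fun t : Finset V => (↑t : Set V)) h
  have hfibM : ∀ x0, x0 ∈ M → M.filter (fun x => compF x = compF x0) = compF x0 := by
    intro x0 _
    ext a
    rw [Finset.mem_filter, hmem_compF]
    constructor
    · rintro ⟨haM, hEq⟩
      have haself : a ∈ componentIn G MS a :=
        mem_componentIn_self (by exact_mod_cast haM)
      rw [hcomp_of_compF a x0 (by exact_mod_cast haM) hEq] at haself
      exact haself
    · intro haC
      have haMS : a ∈ MS := componentIn_subset haC
      exact ⟨by exact_mod_cast haMS, hcompF_congr a x0 haC⟩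
  have hfibY : ∀ x0, x0 ∈ M → Y3f.filter (fun x => compF x = compF x0) = RF x0 := by
    intro x0 _
    ext a
    rw [Finset.mem_filter, hmem_RF, hmem_Y3f]
    constructor
    · rintro ⟨⟨haMS, haR⟩, hEq⟩
      rwa [hcomp_of_compF a x0 haMS hEq] at haR
    · intro haR
      have haC : a ∈ componentIn G MS x0 := hRsub_all _ haR
      have haMS : a ∈ MS := componentIn_subset haC
      have heq : componentIn G MS a = componentIn G MS x0 := componentIn_eq_of_mem haC
      exact ⟨⟨haMS, by rw [heq]; exact haR⟩, hcompF_congr a x0 haC⟩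
  -- the per-component weight bound
  have hperC : ∀ x0 ∈ M, ∑ x ∈ RF x0, w x ≤ (ε3 * Tpow^2) * ∑ x ∈ compF x0, w x := by
    intro x0 hx0
    have hx0MS : x0 ∈ MS := by exact_mod_cast hx0
    have hCne : (componentIn G MS x0).Nonempty := ⟨x0, mem_componentIn_self hx0MS⟩
    obtain ⟨hRcard, -⟩ := hRspec (componentIn G MS x0) (hCfin x0) hCne
    have hw0pos : 0 < w x0 := hMSpos x0 hx0MS
    have hbound1 : ∀ x ∈ RF x0, w x ≤ Tpow * w x0 := by
      intro x hx
      have hxC : x ∈ componentIn G MS x0 := hRsub_all _ ((hmem_RF x x0).mp hx)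
      exact hband x0 x (mem_componentIn_iff.mp hxC)
    have hbound2 : ∀ x ∈ compF x0, w x0 / Tpow ≤ w x := by
      intro x hx
      have hxC : x ∈ componentIn G MS x0 := (hmem_compF x x0).mp hx
      have := hband x x0 (mem_componentIn_iff.mp hxC).symm
      rw [div_le_iff₀ hTpowpos]
      linarith [this]
    have hsum1 : ∑ x ∈ RF x0, w x ≤ (RF x0).card • (Tpow * w x0) :=
      Finset.sum_le_card_nsmul _ _ _ hbound1
    have hsum2 : (compF x0).card • (w x0 / Tpow) ≤ ∑ x ∈ compF x0, w x :=
      Finset.card_nsmul_le_sum _ _ _ hbound2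
    rw [nsmul_eq_mul] at hsum1 hsum2
    have hcardR : ((RF x0).card : ℝ) < ε3 * ((compF x0).card : ℝ) := by
      have e1 : (RF x0).card = (Rsep (componentIn G MS x0)).ncard :=
        (Set.ncard_eq_toFinset_card _ (hRfin x0)).symm
      have e2 : (compF x0).card = (componentIn G MS x0).ncard :=
        (Set.ncard_eq_toFinset_card _ (hCfin x0)).symm
      rw [e1, e2]
      exact hRcard
    have hTw : 0 < Tpow * w x0 := by positivity
    calc ∑ x ∈ RF x0, w x ≤ ((RF x0).card : ℝ) * (Tpow * w x0) := hsum1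
      _ ≤ (ε3 * ((compF x0).card : ℝ)) * (Tpow * w x0) :=
          mul_le_mul_of_nonneg_right hcardR.le hTw.le
      _ = (ε3 * Tpow^2) * (((compF x0).card : ℝ) * (w x0 / Tpow)) := by
          rw [div_eq_mul_inv]
          have hTT : Tpow * Tpow⁻¹ = 1 := mul_inv_cancel₀ hTpowpos.ne'
          linear_combination (-(ε3 * ((compF x0).card : ℝ) * w x0 * Tpow)) * hTT
      _ ≤ (ε3 * Tpow^2) * ∑ x ∈ compF x0, w x :=
          mul_le_mul_of_nonneg_left hsum2 (by positivity)
  -- summing over the components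
  set I : Finset (Finset V) := M.image compF with hIdef
  have hA1 : ∑ x ∈ Y3f, w x
      = ∑ C ∈ I, ∑ x ∈ Y3f.filter (fun x => compF x = C), w x :=
    (Finset.sum_fiberwise_of_maps_to
      (fun x hx => Finset.mem_image_of_mem compF (hY3fM hx)) w).symm
  have hA2 : ∑ x ∈ M, w x
      = ∑ C ∈ I, ∑ x ∈ M.filter (fun x => compF x = C), w x :=
    (Finset.sum_fiberwise_of_maps_to (fun x hx => Finset.mem_image_of_mem compF hx) w).symm
  have hY3w : ∑ x ∈ Y3f, w x ≤ (ε/3) * Wt := by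
    have hMW : ∑ x ∈ M, w x ≤ Wt :=
      Finset.sum_le_sum_of_subset_of_nonneg hMS (fun i _ _ => hw0 i)
    have hstepI : ∑ x ∈ Y3f, w x ≤ (ε3 * Tpow^2) * ∑ x ∈ M, w x := by
      rw [hA1, hA2, Finset.mul_sum]
      refine Finset.sum_le_sum ?_
      intro C hC
      obtain ⟨x0, hx0, rfl⟩ := Finset.mem_image.mp hC
      rw [hfibY x0 hx0, hfibM x0 hx0]
      exact hperC x0 hx0
    rw [hε3T] at hstepI
    refine le_trans hstepI ?_
    exact mul_le_mul_of_nonneg_left hMW (by positivity)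
  -- assemble the final cut set
  set Kf : Finset V := M \ Y3f with hKfdef
  refine ⟨(↑Kf : Set V)ᶜ, ?_, ?_⟩
  · -- the weight bound
    have hw_eq : ∑ᶠ x ∈ ((↑Kf : Set V)ᶜ), w x = ∑ x ∈ S \ Kf, w x := by
      refine finsum_mem_eq_sum_of_subset w ?_ ?_
      · intro x hx
        obtain ⟨hx1, hx2⟩ := hx
        rw [Finset.coe_sdiff]
        refine ⟨(hSmem x).mpr hx2, ?_⟩
        simpa using hx1
      · intro x hx
        rw [Finset.coe_sdiff] at hx
        simpa using hx.2
    rw [hw_eq, htot]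
    have hsub3 : S \ Kf ⊆ (Y1 ∪ Y2) ∪ Y3f := by
      intro x hx
      rw [Finset.mem_sdiff] at hx
      obtain ⟨hxS, hxK⟩ := hx
      rw [hKfdef, Finset.mem_sdiff] at hxK
      push_neg at hxK
      by_cases hxM : x ∈ M
      · exact Finset.mem_union_right _ (hxK hxM)
      · rw [hMdef, Finset.mem_sdiff] at hxM
        push_neg at hxM
        rw [Finset.mem_union, Finset.mem_union]
        by_cases hxY1 : x ∈ Y1
        · exact Or.inl (Or.inl hxY1)
        · exact Or.inl (Or.inr (hxM (Finset.mem_sdiff.mpr ⟨hxS, hxY1⟩)))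
    have hd12 : Disjoint Y1 Y2 := by
      rw [Finset.disjoint_left]
      intro a ha1 ha2
      rw [hY2def, Finset.mem_filter, Finset.mem_sdiff] at ha2
      exact ha2.1.2 ha1
    have hd123 : Disjoint (Y1 ∪ Y2) Y3f := by
      rw [Finset.disjoint_left]
      intro a ha1 ha3
      have haM : a ∈ M := hY3fM ha3
      rw [hMdef, Finset.mem_sdiff, Finset.mem_sdiff] at haM
      rcases Finset.mem_union.mp ha1 with h | h
      · exact haM.1.2 h
      · exact haM.2 h
    calc ∑ x ∈ S \ Kf, w x ≤ ∑ x ∈ (Y1 ∪ Y2) ∪ Y3f, w x :=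
        Finset.sum_le_sum_of_subset_of_nonneg hsub3 (fun i _ _ => hw0 i)
      _ = ∑ x ∈ Y1, w x + ∑ x ∈ Y2, w x + ∑ x ∈ Y3f, w x := by
          rw [Finset.sum_union hd123, Finset.sum_union hd12]
      _ ≤ (ε/3) * Wt + (ε/3) * Wt + (ε/3) * Wt := by
          linarith [hY1w, hY2w, hY3w]
      _ = ε * Wt := by ring
  · -- the small components property
    rw [compl_compl]
    intro x hx
    have hxKf : x ∈ Kf := by exact_mod_cast hx
    rw [hKfdef, Finset.mem_sdiff] at hxKf
    obtain ⟨hxM, hxY3⟩ := hxKf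
    have hxMS : x ∈ MS := by exact_mod_cast hxM
    have hCne : (componentIn G MS x).Nonempty := ⟨x, mem_componentIn_self hxMS⟩
    obtain ⟨-, hsmall⟩ := hRspec (componentIn G MS x) (hCfin x) hCne
    have hxC : x ∈ componentIn G MS x := mem_componentIn_self hxMS
    have hxR : x ∉ Rsep (componentIn G MS x) := by
      intro hc
      exact hxY3 ((hmem_Y3f x).mpr ⟨hxMS, hc⟩)
    have hKfMS : (↑Kf : Set V) ⊆ MS := by
      intro a ha
      have : a ∈ Kf := ha
      rw [hKfdef, Finset.mem_sdiff] at this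
      exact_mod_cast this.1
    have hsubC : componentIn G (↑Kf : Set V) x
        ⊆ componentIn G (componentIn G MS x \ Rsep (componentIn G MS x)) x := by
      intro y hy
      obtain ⟨p, hp⟩ := mem_componentIn_iff.mp hy
      have hsupp : ∀ v ∈ p.support, v ∈ componentIn G MS x \ Rsep (componentIn G MS x) := by
        intro v hv
        have hvK : v ∈ (↑Kf : Set V) := hp v hv
        have hvC : v ∈ componentIn G MS x :=
          componentIn_mono hKfMS (mem_componentIn_of_mem_support hp hv)
        refine ⟨hvC, fun hvR => ?_⟩
        have heq : componentIn G MS v = componentIn G MS x := componentIn_eq_of_mem hvC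
        have hvY3 : v ∈ Y3f := (hmem_Y3f v).mpr ⟨hKfMS hvK, by rw [heq]; exact hvR⟩
        have : v ∈ Kf := hvK
        rw [hKfdef, Finset.mem_sdiff] at this
        exact this.2 hvY3
      exact mem_componentIn_iff.mpr ⟨p, hsupp⟩
    obtain ⟨hfinC, hcardC⟩ := hsmall x ⟨hxC, hxR⟩
    exact ⟨hfinC.subset hsubC, le_trans (Set.ncard_le_ncard hsubC hfinC) hcardC⟩


end AFPaper
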